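/- Let T ∈ ℕ with T ≥ 1, r > 0, α₀, β₀ ∈ ℝ, and set λ = (3T−1)/(2πr). Assume (B1) 0 ≤ λ < 1/2, (B2) πλ < α₀/r < π(1−λ), (B3) πλ < −β₀/r < π(1−λ), and (B4) (α₀−β₀)/r < π(1 − 2(T+1)λ/(3T−1)). Then for every (t,x) ∈ Λ*_{2T}: sin(η_j) ≠ 0 for each j = 1,…,5, and the trigonometric elementary weight q̂(t,x) = ∏_{j=1}^{5} [sin(ζ_j) / sin(η_j)] is a strictly positive real number; consequently the trigonometric excursion measure P̂^{0,0}_{2T} is a probability measure. -/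

import Mathlib

open scoped Real
set_option maxHeartbeats 1000000

/-- The region `Λ*_{2T}` of spatio-temporal points that can carry a rightward step. -/
def LambdaStar (T : ℕ) : Set (ℤ × ℤ) :=
  {p | Even (p.1 + p.2) ∧
    ((1 ≤ p.1 ∧ p.1 ≤ (T : ℤ) ∧ -p.1 + 2 ≤ p.2 ∧ p.2 ≤ p.1) ∨
     ((T : ℤ) + 1 ≤ p.1 ∧ p.1 ≤ 2 * (T : ℤ) ∧ p.1 - 2 * (T : ℤ) ≤ p.2 ∧
       p.2 ≤ -p.1 + 2 * (T : ℤ)))}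

/-- The numerator arguments `ζ₁, …, ζ₅`. -/
noncomputable def zetaArg (T : ℕ) (r α₀ β₀ : ℝ) (t x : ℤ) : Fin 5 → ℝ :=
  ![(2 * α₀ - (3 * (T : ℝ) + 1) + (3 * (t : ℝ) - (x : ℝ))) / (2 * r),
    (2 * β₀ - (3 * (T : ℝ) + 1) + 2 * ((t : ℝ) + (x : ℝ))) / (2 * r),
    (2 * β₀ - (3 * (T : ℝ) + 1) + 2 * ((t : ℝ) + (x : ℝ))) / (2 * r) - 1 / r,
    (2 * (α₀ - β₀) - ((t : ℝ) + (x : ℝ))) / (2 * r),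
    (2 * (α₀ - β₀) - ((t : ℝ) + (x : ℝ))) / (2 * r) + 1 / r]

/-- The denominator arguments `η₁, …, η₅`. -/
noncomputable def etaArg (T : ℕ) (r α₀ β₀ : ℝ) (t x : ℤ) : Fin 5 → ℝ :=
  ![(2 * α₀ - (3 * (T : ℝ) + 1) + ((t : ℝ) + (x : ℝ))) / (2 * r),
    (2 * β₀ - (3 * (T : ℝ) + 1) + (3 * (t : ℝ) + (x : ℝ))) / (2 * r),
    (2 * β₀ - (3 * (T : ℝ) + 1) + (3 * (t : ℝ) + (x : ℝ))) / (2 * r) - 1 / r,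
    (α₀ - β₀ - (x : ℝ)) / r,
    (α₀ - β₀ - (x : ℝ)) / r + 1 / r]

/-- Sin is positive on numerator/(2r) when 0 < numerator < 2πr. -/
lemma sin_pos_aux (r a : ℝ) (hr : 0 < r) (h1 : 0 < a) (h2 : a < 2 * π * r) :
    0 < Real.sin (a / (2 * r)) := by
  apply Real.sin_pos_of_pos_of_lt_pi
  · exact div_pos h1 (by linarith)
  · rw [div_lt_iff₀ (by linarith : (0:ℝ) < 2 * r)]
    nlinarith [Real.pi_pos]

/-- Sin is negative on numerator/(2r) when −2πr < numerator < 0. -/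
lemma sin_neg_aux (r a : ℝ) (hr : 0 < r) (h1 : a < 0) (h2 : -(2 * π * r) < a) :
    Real.sin (a / (2 * r)) < 0 := by
  have h := sin_pos_aux r (-a) hr (by linarith) (by linarith)
  rw [neg_div, Real.sin_neg] at h
  linarith

/-- Corollary 5.2: positivity conditions for the trigonometric elementary weight,
hence for the trigonometric excursion measure. -/
theorem trigonometric_weight_positive (T : ℕ) (hT : 1 ≤ T) (r α₀ β₀ : ℝ)
    (hr : 0 < r) (lam : ℝ) (hlam : lam = (3 * (T : ℝ) - 1) / (2 * π * r))
    (hB1 : 0 ≤ lam ∧ lam < 1 / 2)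
    (hB2 : π * lam < α₀ / r ∧ α₀ / r < π * (1 - lam))
    (hB3 : π * lam < -β₀ / r ∧ -β₀ / r < π * (1 - lam))
    (hB4 : (α₀ - β₀) / r < π * (1 - 2 * ((T : ℝ) + 1) / (3 * (T : ℝ) - 1) * lam)) :
    ∀ t x : ℤ, (t, x) ∈ LambdaStar T →
      (∀ j : Fin 5, Real.sin (etaArg T r α₀ β₀ t x j) ≠ 0) ∧
      0 < ∏ j : Fin 5, Real.sin (zetaArg T r α₀ β₀ t x j) / Real.sin (etaArg T r α₀ β₀ t x j) := by
  have hπ : 0 < π := Real.pi_pos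
  have hT' : (1:ℝ) ≤ (T:ℝ) := by exact_mod_cast hT
  have h2πr : (0:ℝ) < 2 * π * r := by positivity
  have hkey : 2 * π * r * lam = 3 * (T:ℝ) - 1 := by
    rw [hlam]; field_simp
  -- basic consequences of B1–B4
  have hπr : 3 * (T:ℝ) - 1 < π * r := by
    have := hB1.2
    nlinarith
  have hA1 : 3 * (T:ℝ) - 1 < 2 * α₀ := by
    have h1 : π * lam * r < α₀ := by
      have := mul_lt_mul_of_pos_right hB2.1 hr
      rwa [div_mul_cancel₀ _ hr.ne'] at this
    nlinarith
  have hA2 : 2 * α₀ < 2 * π * r - (3 * (T:ℝ) - 1) := by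
    have h1 : α₀ < π * (1 - lam) * r := by
      have := mul_lt_mul_of_pos_right hB2.2 hr
      rwa [div_mul_cancel₀ _ hr.ne'] at this
    nlinarith
  have hBb1 : 3 * (T:ℝ) - 1 < -(2 * β₀) := by
    have h1 : π * lam * r < -β₀ := by
      have := mul_lt_mul_of_pos_right hB3.1 hr
      rwa [neg_div, neg_mul, div_mul_cancel₀ _ hr.ne'] at this
    nlinarith
  have hBb2 : -(2 * β₀) < 2 * π * r - (3 * (T:ℝ) - 1) := by
    have h1 : -β₀ < π * (1 - lam) * r := by
      have := mul_lt_mul_of_pos_right hB3.2 hr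
      rwa [neg_div, neg_mul, div_mul_cancel₀ _ hr.ne'] at this
    nlinarith
  have hAB : α₀ - β₀ < π * r - ((T:ℝ) + 1) := by
    have h1 : α₀ - β₀ < π * (1 - 2 * ((T : ℝ) + 1) / (3 * (T : ℝ) - 1) * lam) * r := by
      have := mul_lt_mul_of_pos_right hB4 hr
      rwa [div_mul_cancel₀ _ hr.ne'] at this
    have hd : (0:ℝ) < 3 * (T:ℝ) - 1 := by linarith
    have heq : π * (1 - 2 * ((T : ℝ) + 1) / (3 * (T : ℝ) - 1) * lam) * r
        = π * r - ((T:ℝ) + 1) := by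
      have hd' : (3 * (T:ℝ) - 1) ≠ 0 := hd.ne'
      have hc : 2 * ((T:ℝ) + 1) / (3 * (T:ℝ) - 1) * (3 * (T:ℝ) - 1) = 2 * ((T:ℝ) + 1) :=
        div_mul_cancel₀ _ hd'
      linear_combination (-1/2 : ℝ) * ((2 * ((T:ℝ) + 1) / (3 * (T:ℝ) - 1)) * hkey + hc)
    linarith [heq ▸ h1]
  intro t x hmem
  obtain ⟨-, hcase⟩ := hmem
  -- real bounds on the relevant integer combinations
  have hx1 : 1 - (T:ℝ) ≤ (x:ℝ) ∧ (x:ℝ) ≤ (T:ℝ) ∧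
      2 ≤ (t:ℝ) + (x:ℝ) ∧ (t:ℝ) + (x:ℝ) ≤ 2 * (T:ℝ) ∧
      2 ≤ 3 * (t:ℝ) - (x:ℝ) ∧ 3 * (t:ℝ) - (x:ℝ) ≤ 6 * (T:ℝ) ∧
      4 ≤ 3 * (t:ℝ) + (x:ℝ) ∧ 3 * (t:ℝ) + (x:ℝ) ≤ 6 * (T:ℝ) := by
    rcases hcase with ⟨h1, h2, h3, h4⟩ | ⟨h1, h2, h3, h4⟩
    · have H1 : (1:ℝ) ≤ (t:ℝ) := by exact_mod_cast h1
      have H2 : (t:ℝ) ≤ (T:ℝ) := by exact_mod_cast h2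
      have H3 : -(t:ℝ) + 2 ≤ (x:ℝ) := by exact_mod_cast h3
      have H4 : (x:ℝ) ≤ (t:ℝ) := by exact_mod_cast h4
      exact ⟨by linarith, by linarith, by linarith, by linarith, by linarith, by linarith,
        by linarith, by linarith⟩
    · have H1 : (T:ℝ) + 1 ≤ (t:ℝ) := by exact_mod_cast h1
      have H2 : (t:ℝ) ≤ 2 * (T:ℝ) := by exact_mod_cast h2
      have H3 : (t:ℝ) - 2 * (T:ℝ) ≤ (x:ℝ) := by exact_mod_cast h3
      have H4 : (x:ℝ) ≤ -(t:ℝ) + 2 * (T:ℝ) := by exact_mod_cast h4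
      exact ⟨by linarith, by linarith, by linarith, by linarith, by linarith, by linarith,
        by linarith, by linarith⟩
  obtain ⟨hxl, hxu, htx1, htx2, hmx1, hmx2, hpx1, hpx2⟩ := hx1
  -- sin sign facts for the ten arguments
  have hζ1 : 0 < Real.sin ((2 * α₀ - (3 * (T : ℝ) + 1) + (3 * (t : ℝ) - (x : ℝ))) / (2 * r)) :=
    sin_pos_aux r _ hr (by linarith) (by linarith)
  have hη1 : 0 < Real.sin ((2 * α₀ - (3 * (T : ℝ) + 1) + ((t : ℝ) + (x : ℝ))) / (2 * r)) :=
    sin_pos_aux r _ hr (by linarith) (by linarith)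
  have hζ2 : Real.sin ((2 * β₀ - (3 * (T : ℝ) + 1) + 2 * ((t : ℝ) + (x : ℝ))) / (2 * r)) < 0 :=
    sin_neg_aux r _ hr (by linarith) (by linarith)
  have hη2 : Real.sin ((2 * β₀ - (3 * (T : ℝ) + 1) + (3 * (t : ℝ) + (x : ℝ))) / (2 * r)) < 0 :=
    sin_neg_aux r _ hr (by linarith) (by linarith)
  have eζ3 : (2 * β₀ - (3 * (T : ℝ) + 1) + 2 * ((t : ℝ) + (x : ℝ))) / (2 * r) - 1 / r
      = (2 * β₀ - (3 * (T : ℝ) + 1) + 2 * ((t : ℝ) + (x : ℝ)) - 2) / (2 * r) := by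
    field_simp
  have hζ3 : Real.sin ((2 * β₀ - (3 * (T : ℝ) + 1) + 2 * ((t : ℝ) + (x : ℝ))) / (2 * r) - 1 / r) < 0 := by
    rw [eζ3]; exact sin_neg_aux r _ hr (by linarith) (by linarith)
  have eη3 : (2 * β₀ - (3 * (T : ℝ) + 1) + (3 * (t : ℝ) + (x : ℝ))) / (2 * r) - 1 / r
      = (2 * β₀ - (3 * (T : ℝ) + 1) + (3 * (t : ℝ) + (x : ℝ)) - 2) / (2 * r) := by
    field_simp
  have hη3 : Real.sin ((2 * β₀ - (3 * (T : ℝ) + 1) + (3 * (t : ℝ) + (x : ℝ))) / (2 * r) - 1 / r) < 0 := by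
    rw [eη3]; exact sin_neg_aux r _ hr (by linarith) (by linarith)
  have hζ4 : 0 < Real.sin ((2 * (α₀ - β₀) - ((t : ℝ) + (x : ℝ))) / (2 * r)) :=
    sin_pos_aux r _ hr (by linarith) (by linarith)
  have eη4 : (α₀ - β₀ - (x:ℝ)) / r = (2 * (α₀ - β₀) - 2 * (x:ℝ)) / (2 * r) := by
    field_simp
  have hη4 : 0 < Real.sin ((α₀ - β₀ - (x : ℝ)) / r) := by
    rw [eη4]; exact sin_pos_aux r _ hr (by linarith) (by linarith)
  have eζ5 : (2 * (α₀ - β₀) - ((t : ℝ) + (x : ℝ))) / (2 * r) + 1 / r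
      = (2 * (α₀ - β₀) - ((t : ℝ) + (x : ℝ)) + 2) / (2 * r) := by
    field_simp
  have hζ5 : 0 < Real.sin ((2 * (α₀ - β₀) - ((t : ℝ) + (x : ℝ))) / (2 * r) + 1 / r) := by
    rw [eζ5]; exact sin_pos_aux r _ hr (by linarith) (by linarith)
  have eη5 : (α₀ - β₀ - (x:ℝ)) / r + 1 / r = (2 * (α₀ - β₀) - 2 * (x:ℝ) + 2) / (2 * r) := by
    field_simp
  have hη5 : 0 < Real.sin ((α₀ - β₀ - (x : ℝ)) / r + 1 / r) := by
    rw [eη5]; exact sin_pos_aux r _ hr (by linarith) (by linarith)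
  constructor
  · intro j
    fin_cases j <;>
      simp only [etaArg, Matrix.cons_val_zero, Matrix.cons_val_one, Matrix.head_cons,
        Matrix.cons_val_two, Matrix.tail_cons, Matrix.cons_val_three, Matrix.cons_val_four]
    · exact ne_of_gt hη1
    · exact ne_of_lt hη2
    · exact ne_of_lt hη3
    · exact ne_of_gt hη4
    · exact ne_of_gt hη5
  · rw [Fin.prod_univ_five]
    simp only [zetaArg, etaArg, Matrix.cons_val_zero, Matrix.cons_val_one, Matrix.head_cons,
      Matrix.cons_val_two, Matrix.tail_cons, Matrix.cons_val_three, Matrix.cons_val_four]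
    have p1 := div_pos hζ1 hη1
    have p2 := div_pos_of_neg_of_neg hζ2 hη2
    have p3 := div_pos_of_neg_of_neg hζ3 hη3
    have p4 := div_pos hζ4 hη4
    have p5 := div_pos hζ5 hη5
    positivity
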